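/- Let W ∈ ℝ^{(m+1)×(m+1−α)} be a matrix whose columns form a basis for R = Nul([−1_n, U; −1_n, V]), and let Z ∈ S^{m+1−α} be positive semidefinite with diag(W Z W^T) = W Z W^T e_0 and e_0^T W Z W^T e_0 = 1. Set Y = W Z W^T, let X ∈ S^m be the lower-right m×m block of Y and x = diag(X). Then Y = [[1, x^T],[x, X]] satisfies ⟨J_m, X⟩ = n², ⟨Ũ, Y⟩ = 0 and ⟨Ṽ, Y⟩ = 0, where Ũ = Σ_{i∈N} (−1; u_i)(−1; u_i)^T and Ṽ = Σ_{i∈N} (−1; v_i)(−1; v_i)^T; that is, Y is feasible for the relaxation (SDP_1). -/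

import Mathlib

open Matrix

noncomputable section

/-- Trace inner product `⟨M, N⟩ = tr(Mᵀ N)` on real matrices. -/
def tip {k l : ℕ} (M N : Matrix (Fin k) (Fin l) ℝ) : ℝ := (Mᵀ * N).trace

/-- The extended matrix `[[1, xᵀ], [x, X]]`, with the top row/column indexed by `0`. -/
def extM {m : ℕ} (x : Fin m → ℝ) (X : Matrix (Fin m) (Fin m) ℝ) :
    Matrix (Fin (m + 1)) (Fin (m + 1)) ℝ :=
  Matrix.of (Fin.cons (Fin.cons 1 x) (fun i => Fin.cons (x i) (fun j => X i j)))

/-- if the columns of `W` form a basis of `R = Nul([-1ₙ, U; -1ₙ, V])` and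
`Z ⪰ 0` is feasible for `(SDP_{S1})`, then `Y = W Z Wᵀ` has the form `[[1,xᵀ],[x,X]]`
with `x = diag(X)` and satisfies `⟨J, X⟩ = n²` and `⟨Ũ, Y⟩ = ⟨Ṽ, Y⟩ = 0`; i.e., `Y` is
feasible for `(SDP₁)`. -/
theorem facially_reduced_point_feasible
    (n m : ℕ) (src tgt : Fin m → Fin n)
    (h_simple : ∀ e f : Fin m, src e = src f → tgt e = tgt f → e = f)
    (h_noloop : ∀ e : Fin m, src e ≠ tgt e)
    (U V : Matrix (Fin n) (Fin m) ℝ)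
    (hU : ∀ i e, U i e = if src e = i then 1 else 0)
    (hV : ∀ i e, V i e = if tgt e = i then 1 else 0)
    (α : ℕ) (hα : α = (Matrix.fromRows U V).rank)
    (B : Matrix (Fin n ⊕ Fin n) (Fin (m + 1)) ℝ)
    (hBu : ∀ i, B (Sum.inl i) = Fin.cons (-1) (U i))
    (hBv : ∀ i, B (Sum.inr i) = Fin.cons (-1) (V i))
    (W : Matrix (Fin (m + 1)) (Fin (m + 1 - α)) ℝ)
    (hWli : LinearIndependent ℝ (fun j (i : Fin (m + 1)) => W i j))
    (hWspan : Submodule.span ℝ (Set.range fun j (i : Fin (m + 1)) => W i j)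
        = LinearMap.ker B.mulVecLin)
    (Z : Matrix (Fin (m + 1 - α)) (Fin (m + 1 - α)) ℝ) (hZ : Z.PosSemidef)
    (Y : Matrix (Fin (m + 1)) (Fin (m + 1)) ℝ) (hY : Y = W * Z * Wᵀ)
    (hdiag : Y.diag = Y.mulVec (Pi.single 0 1))
    (h00 : Pi.single (0 : Fin (m + 1)) (1 : ℝ) ⬝ᵥ Y.mulVec (Pi.single 0 1) = 1)
    (X : Matrix (Fin m) (Fin m) ℝ) (hX : ∀ e f, X e f = Y e.succ f.succ)
    (x : Fin m → ℝ) (hx : x = X.diag)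
    (Ut Vt : Matrix (Fin (m + 1)) (Fin (m + 1)) ℝ)
    (hUt : Ut = ∑ i : Fin n, vecMulVec (Fin.cons (-1) (U i)) (Fin.cons (-1) (U i)))
    (hVt : Vt = ∑ i : Fin n, vecMulVec (Fin.cons (-1) (V i)) (Fin.cons (-1) (V i))) :
    Y = extM x X ∧
      tip (Matrix.of fun _ _ => (1 : ℝ)) X = (n : ℝ) ^ 2 ∧
      tip Ut Y = 0 ∧ tip Vt Y = 0 := by
  -- Y is symmetric
  have hZt : Zᵀ = Z := by have h := hZ.1; simp at h; exact h
  have hYsymm : ∀ i j, Y i j = Y j i := by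
    intro i j
    have h : Yᵀ = Y := by
      rw [hY, Matrix.transpose_mul, Matrix.transpose_mul, Matrix.transpose_transpose, hZt,
        ← Matrix.mul_assoc]
    exact (congrFun (congrFun h i) j).symm
  -- columns of W are in the kernel of B
  have hcol : ∀ j, B.mulVecLin (fun i => W i j) = 0 := by
    intro j
    have hmem : (fun i => W i j) ∈ LinearMap.ker B.mulVecLin := by
      rw [← hWspan]; exact Submodule.subset_span ⟨j, rfl⟩
    exact hmem
  have hBW : B * W = 0 := by
    ext r j
    have := congrFun (hcol j) r
    simpa [Matrix.mulVecLin_apply, Matrix.mulVec, dotProduct, Matrix.mul_apply] using this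
  have hBY : B * Y = 0 := by
    rw [hY, ← Matrix.mul_assoc, ← Matrix.mul_assoc, hBW, Matrix.zero_mul, Matrix.zero_mul]
  have hrow : ∀ r c, ∑ k, B r k * Y k c = 0 := by
    intro r c
    have := congrFun (congrFun hBY r) c
    simpa [Matrix.mul_apply] using this
  -- basic entries
  have hY00 : Y 0 0 = 1 := by
    simpa [Matrix.mulVec_single, dotProduct, Pi.single_apply] using h00
  have hYi0 : ∀ i, Y i i = Y i 0 := by
    intro i
    have := congrFun hdiag i
    simpa [Matrix.mulVec_single, diag] using this
  -- sum of U-rows of B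
  have hsumU : ∀ k, ∑ i : Fin n, B (Sum.inl i) k = if k = 0 then -(n : ℝ) else 1 := by
    intro k
    induction k using Fin.cases with
    | zero => simp [hBu]
    | succ e =>
        simp only [hBu, Fin.cons_succ, hU]
        rw [Finset.sum_ite_eq]
        simp [Fin.succ_ne_zero]
  -- key row-sum identity
  have hkey : ∀ c, ∑ e : Fin m, Y e.succ c = (n : ℝ) * Y 0 c := by
    intro c
    have h1 : ∑ i : Fin n, ∑ k, B (Sum.inl i) k * Y k c = 0 := by
      simp [hrow]
    rw [Finset.sum_comm] at h1
    have h2 : ∑ k, (∑ i : Fin n, B (Sum.inl i) k) * Y k c = 0 := by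
      simpa [Finset.sum_mul] using h1
    simp only [hsumU] at h2
    rw [Fin.sum_univ_succ] at h2
    simp only [if_pos rfl, Fin.succ_ne_zero, if_neg, reduceIte, one_mul] at h2
    linarith
  -- diagonal / entry facts
  have hx' : ∀ e : Fin m, x e = Y e.succ 0 := by
    intro e
    rw [hx]
    show X e e = Y e.succ 0
    rw [hX]
    exact hYi0 _
  have htipa : ∀ (a : Fin (m+1) → ℝ), (∀ c, ∑ k, a k * Y k c = 0) →
      ((vecMulVec a a)ᵀ * Y).trace = 0 := by
    intro a h
    simp only [trace, diag, Matrix.mul_apply, transpose_apply, vecMulVec_apply]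
    have hc : ∀ c, ∑ k, a k * a c * Y k c = 0 := by
      intro c
      calc ∑ k, a k * a c * Y k c = a c * ∑ k, a k * Y k c := by
            rw [Finset.mul_sum]; congr 1; ext k; ring
        _ = 0 := by rw [h c, mul_zero]
    simp [hc]
  refine ⟨?_, ?_, ?_, ?_⟩
  · ext i j
    induction i using Fin.cases with
    | zero =>
      induction j using Fin.cases with
      | zero => simpa [extM] using hY00
      | succ f =>
          rw [hYsymm]
          simp only [extM, Matrix.of_apply, Fin.cons_zero, Fin.cons_succ]
          exact (hx' f).symm
    | succ e =>
      induction j using Fin.cases with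
      | zero =>
          simp only [extM, Matrix.of_apply, Fin.cons_zero, Fin.cons_succ]
          exact (hx' e).symm
      | succ f =>
          simp only [extM, Matrix.of_apply, Fin.cons_succ]
          exact (hX e f).symm
  · have : tip (Matrix.of fun _ _ => (1 : ℝ)) X = ∑ c : Fin m, ∑ k : Fin m, X k c := by
      simp [tip, trace, Matrix.mul_apply, diag]
    rw [this]
    have hYn : ∑ e : Fin m, Y e.succ 0 = (n : ℝ) := by
      rw [hkey 0, hY00, mul_one]
    calc ∑ c : Fin m, ∑ k : Fin m, X k c
        = ∑ c : Fin m, ∑ k : Fin m, Y k.succ c.succ := by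
          refine Finset.sum_congr rfl fun c _ => Finset.sum_congr rfl fun k _ => hX k c
      _ = ∑ c : Fin m, (n : ℝ) * Y 0 c.succ := by
          refine Finset.sum_congr rfl fun c _ => hkey c.succ
      _ = (n : ℝ) * ∑ c : Fin m, Y c.succ 0 := by
          rw [Finset.mul_sum]
          refine Finset.sum_congr rfl fun c _ => by rw [hYsymm]
      _ = (n : ℝ) ^ 2 := by rw [hYn]; ring
  · rw [hUt, tip, Matrix.transpose_sum, Matrix.sum_mul, trace_sum]
    refine Finset.sum_eq_zero fun i _ => htipa _ fun c => ?_
    rw [← hBu]; exact hrow _ c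
  · rw [hVt, tip, Matrix.transpose_sum, Matrix.sum_mul, trace_sum]
    refine Finset.sum_eq_zero fun i _ => htipa _ fun c => ?_
    rw [← hBv]; exact hrow _ c
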